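/- Let g be a random vector in ℝ^d on a probability space such that g and ‖g‖² are integrable, suppose that for every coordinate v ∈ {1, …, d} the probability that the v-th coordinate of g is nonzero is at most Δ, with 0 < Δ ≤ 1, and let m = E[g]. Then E‖g − m‖² ≥ ((1 − Δ)/Δ) · ‖m‖². -/

import Mathlib

open MeasureTheory Filter

private lemma sq_integral_le_aux {Ω : Type*} [MeasurableSpace Ω] (μ : Measure Ω)
    [IsFiniteMeasure μ] (f : Ω → ℝ) (hf : Integrable f μ)
    (hf2 : Integrable (fun ω => f ω ^ 2) μ) :
    (∫ ω, f ω ∂μ) ^ 2 ≤ (μ Set.univ).toReal * ∫ ω, f ω ^ 2 ∂μ := by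
  set c := (μ Set.univ).toReal with hc_def
  by_cases hc : c = 0
  · have hμ : μ = 0 := by
      rcases (ENNReal.toReal_eq_zero_iff _).mp hc with h | h
      · exact Measure.measure_univ_eq_zero.mp h
      · exact absurd h (measure_ne_top μ _)
    simp [hμ]
  · have hc0 : 0 < c := lt_of_le_of_ne ENNReal.toReal_nonneg (Ne.symm hc)
    set a := (∫ ω, f ω ∂μ) / c with ha_def
    have h0 : 0 ≤ ∫ ω, (f ω - a) ^ 2 ∂μ := integral_nonneg fun ω => sq_nonneg _
    have i1 : Integrable (fun ω => f ω ^ 2 - 2 * a * f ω) μ :=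
      hf2.sub (hf.const_mul (2 * a))
    have hexp : ∫ ω, (f ω - a) ^ 2 ∂μ
        = ∫ ω, f ω ^ 2 ∂μ - 2 * a * ∫ ω, f ω ∂μ + a ^ 2 * c := by
      have h1 : ∀ ω, (f ω - a) ^ 2 = f ω ^ 2 - 2 * a * f ω + a ^ 2 := by
        intro ω; ring
      simp_rw [h1]
      rw [integral_add i1 (integrable_const _),
        integral_sub hf2 (hf.const_mul (2 * a)), integral_const_mul _ _, integral_const]
      simp only [smul_eq_mul, measureReal_def, ← hc_def]
      ring
    rw [hexp] at h0
    have ha : a * c = ∫ ω, f ω ∂μ := div_mul_cancel₀ _ hc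
    nlinarith [h0, ha, hc0]

private lemma sq_integral_le_sparse {Ω : Type*} [MeasurableSpace Ω] (P : Measure Ω)
    [IsProbabilityMeasure P] (f : Ω → ℝ) (hf : Integrable f P)
    (hf2 : Integrable (fun ω => f ω ^ 2) P) {Δ : ℝ} (hΔ0 : 0 ≤ Δ)
    (hS : P {ω | f ω ≠ 0} ≤ ENNReal.ofReal Δ) :
    (∫ ω, f ω ∂P) ^ 2 ≤ Δ * ∫ ω, f ω ^ 2 ∂P := by
  set f' := hf.1.mk f with hf'_def
  have hf'm : StronglyMeasurable f' := hf.1.stronglyMeasurable_mk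
  have hff' : f =ᵐ[P] f' := hf.1.ae_eq_mk
  have hf' : Integrable f' P := hf.congr hff'
  have hff'2 : (fun ω => f ω ^ 2) =ᵐ[P] fun ω => f' ω ^ 2 :=
    hff'.mono fun ω h => by dsimp only; rw [h]
  have hf2' : Integrable (fun ω => f' ω ^ 2) P := hf2.congr hff'2
  set S : Set Ω := {ω | f' ω ≠ 0} with hS_def
  have hSm : MeasurableSet S := (hf'm.measurable (measurableSet_singleton 0)).compl
  have hPS : P S = P {ω | f ω ≠ 0} := by
    refine measure_congr ?_
    filter_upwards [hff'] with ω h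
    change (f' ω ≠ 0) = (f ω ≠ 0); rw [h]
  have hPSΔ : (P S).toReal ≤ Δ := by
    rw [hPS]
    exact ENNReal.toReal_le_of_le_ofReal hΔ0 hS
  have hint1 : ∫ ω, f ω ∂P = ∫ ω, f' ω ∂(P.restrict S) := by
    rw [integral_congr_ae hff']
    have heq : f' = S.indicator f' := by
      ext ω
      by_cases h : ω ∈ S
      · rw [Set.indicator_of_mem h]
      · rw [Set.indicator_of_notMem h]
        simpa [hS_def, not_not] using h
    conv_lhs => rw [heq]
    rw [integral_indicator hSm]
  have hint2 : ∫ ω, f' ω ^ 2 ∂(P.restrict S) ≤ ∫ ω, f ω ^ 2 ∂P := by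
    rw [integral_congr_ae hff'2]
    exact setIntegral_le_integral hf2' (Eventually.of_forall fun ω => sq_nonneg _)
  have key := sq_integral_le_aux (P.restrict S) f' (hf'.restrict) (hf2'.restrict)
  rw [Measure.restrict_apply_univ] at key
  calc (∫ ω, f ω ∂P) ^ 2 = (∫ ω, f' ω ∂(P.restrict S)) ^ 2 := by rw [hint1]
    _ ≤ (P S).toReal * ∫ ω, f' ω ^ 2 ∂(P.restrict S) := key
    _ ≤ Δ * ∫ ω, f ω ^ 2 ∂P := by
        apply mul_le_mul hPSΔ hint2 (integral_nonneg fun ω => sq_nonneg _) hΔ0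

private lemma euclidean_norm_sq_eq {d : ℕ} (x : EuclideanSpace ℝ (Fin d)) :
    ‖x‖ ^ 2 = ∑ v, x v ^ 2 := by
  rw [EuclideanSpace.norm_eq, Real.sq_sqrt (Finset.sum_nonneg fun i _ => sq_nonneg _)]
  simp [Real.norm_eq_abs, sq_abs]

/-- A `Δ`-sparse random vector `g` in `ℝ^d` with mean `m = E g` has variance at least
`((1 - Δ)/Δ) · ‖m‖²`. -/
theorem variance_lower_bound_of_sparse
    {Ω : Type*} [MeasurableSpace Ω] (P : Measure Ω) [IsProbabilityMeasure P]
    {d : ℕ} (g : Ω → EuclideanSpace ℝ (Fin d))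
    (hg : Integrable g P) (hg2 : Integrable (fun ω => ‖g ω‖ ^ 2) P)
    (Δ : ℝ) (hΔ0 : 0 < Δ) (hΔ1 : Δ ≤ 1)
    (hΔ : ∀ v : Fin d, P {ω | g ω v ≠ 0} ≤ ENNReal.ofReal Δ)
    (m : EuclideanSpace ℝ (Fin d)) (hm : m = ∫ ω, g ω ∂P) :
    ((1 - Δ) / Δ) * ‖m‖ ^ 2 ≤ ∫ ω, ‖g ω - m‖ ^ 2 ∂P := by
  have hFv : ∀ v : Fin d, Integrable (fun ω => g ω v) P := fun v =>
    (EuclideanSpace.proj v (𝕜 := ℝ)).integrable_comp hg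
  have hcoord : ∀ (x : EuclideanSpace ℝ (Fin d)) (v : Fin d), x v ^ 2 ≤ ‖x‖ ^ 2 := by
    intro x v
    rw [euclidean_norm_sq_eq]
    exact Finset.single_le_sum (f := fun i => x i ^ 2) (fun i _ => sq_nonneg _)
      (Finset.mem_univ v)
  have hFv2 : ∀ v : Fin d, Integrable (fun ω => g ω v ^ 2) P := by
    intro v
    refine hg2.mono' ?_ (Eventually.of_forall fun ω => ?_)
    · have h := ((hFv v).1.mul (hFv v).1)
      simp only [sq]
      exact h
    · rw [Real.norm_eq_abs, abs_of_nonneg (sq_nonneg _)]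
      exact hcoord (g ω) v
  have hmv : ∀ v : Fin d, m v = ∫ ω, g ω v ∂P := by
    intro v
    rw [hm]
    exact ((EuclideanSpace.proj v (𝕜 := ℝ)).integral_comp_comm hg).symm
  have i1 : ∀ v : Fin d, Integrable (fun ω => g ω v ^ 2 - 2 * m v * g ω v) P :=
    fun v => (hFv2 v).sub ((hFv v).const_mul (2 * m v))
  have hsubint : ∀ v : Fin d, Integrable (fun ω => (g ω v - m v) ^ 2) P := by
    intro v
    have h1 : ∀ ω, (g ω v - m v) ^ 2 = g ω v ^ 2 - 2 * m v * g ω v + m v ^ 2 := by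
      intro ω; ring
    simp_rw [h1]
    exact (i1 v).add (integrable_const _)
  have hvar : ∀ v : Fin d,
      ∫ ω, (g ω v - m v) ^ 2 ∂P = (∫ ω, g ω v ^ 2 ∂P) - m v ^ 2 := by
    intro v
    have h1 : ∀ ω, (g ω v - m v) ^ 2 = g ω v ^ 2 - 2 * m v * g ω v + m v ^ 2 := by
      intro ω; ring
    simp_rw [h1]
    rw [integral_add (i1 v) (integrable_const _),
      integral_sub (hFv2 v) ((hFv v).const_mul (2 * m v)), integral_const_mul _ _,
      integral_const, ← hmv v]
    simp only [measureReal_def, measure_univ, ENNReal.toReal_one, smul_eq_mul, one_mul]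
    ring
  have htotal : ∫ ω, ‖g ω - m‖ ^ 2 ∂P = ∑ v, ((∫ ω, g ω v ^ 2 ∂P) - m v ^ 2) := by
    have h1 : ∀ ω, ‖g ω - m‖ ^ 2 = ∑ v, (g ω v - m v) ^ 2 := by
      intro ω
      rw [euclidean_norm_sq_eq]
      rfl
    simp_rw [h1]
    rw [integral_finset_sum _ fun v _ => hsubint v]
    exact Finset.sum_congr rfl fun v _ => hvar v
  rw [htotal, euclidean_norm_sq_eq, Finset.mul_sum]
  refine Finset.sum_le_sum fun v _ => ?_
  have hkey : (m v) ^ 2 ≤ Δ * ∫ ω, g ω v ^ 2 ∂P := by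
    rw [hmv v]
    exact sq_integral_le_sparse P _ (hFv v) (hFv2 v) hΔ0.le (hΔ v)
  have h2 : m v ^ 2 / Δ ≤ ∫ ω, g ω v ^ 2 ∂P := by
    rw [div_le_iff₀ hΔ0]
    linarith [hkey]
  have h3 : (1 - Δ) / Δ * m v ^ 2 = m v ^ 2 / Δ - m v ^ 2 := by
    field_simp
  linarith [h2]
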